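/- Let Ω ⊆ [n₁]×[n₂]×[n₃] and suppose a, b, c are vectors over ℂ (with all components nonzero) satisfying Q_{ijk} = a_i b_j c_k on Ω, where a₁ = b₁ = 1. Suppose the only solution of the homogeneous real linear system x_i + y_j + z_k = 0 for (i,j,k) ∈ Ω with x₁ = y₁ = 0 is the zero solution (condition (A)). Then for any other solution a', b', c' with a'₁ = b'₁ = 1, we have |a'_i| = |a_i|, |b'_j| = |b_j|, |c'_k| = |c_k| for all indices appearing in Ω. -/

import Mathlib

open Complex

/-- Under condition (A), the absolute values of a normalized complex rank-one
completion are uniquely determined on the indices appearing in `Ω`. -/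
theorem abs_unique_of_condA
    (n₁ n₂ n₃ : ℕ)
    (Ω : Finset (Fin (n₁ + 1) × Fin (n₂ + 1) × Fin (n₃ + 1)))
    (Q : Fin (n₁ + 1) × Fin (n₂ + 1) × Fin (n₃ + 1) → ℂ)
    (a : Fin (n₁ + 1) → ℂ) (b : Fin (n₂ + 1) → ℂ) (c : Fin (n₃ + 1) → ℂ)
    (hnz : ∀ t ∈ Ω, a t.1 ≠ 0 ∧ b t.2.1 ≠ 0 ∧ c t.2.2 ≠ 0)
    (ha0 : a 0 = 1) (hb0 : b 0 = 1)
    (hsol : ∀ t ∈ Ω, Q t = a t.1 * b t.2.1 * c t.2.2)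
    (hA : ∀ x : Fin (n₁ + 1) → ℝ, ∀ y : Fin (n₂ + 1) → ℝ, ∀ z : Fin (n₃ + 1) → ℝ,
      x 0 = 0 → y 0 = 0 → (∀ t ∈ Ω, x t.1 + y t.2.1 + z t.2.2 = 0) →
      ∀ t ∈ Ω, x t.1 = 0 ∧ y t.2.1 = 0 ∧ z t.2.2 = 0) :
    ∀ a' : Fin (n₁ + 1) → ℂ, ∀ b' : Fin (n₂ + 1) → ℂ, ∀ c' : Fin (n₃ + 1) → ℂ,
      (∀ t ∈ Ω, a' t.1 ≠ 0 ∧ b' t.2.1 ≠ 0 ∧ c' t.2.2 ≠ 0) →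
      a' 0 = 1 → b' 0 = 1 →
      (∀ t ∈ Ω, Q t = a' t.1 * b' t.2.1 * c' t.2.2) →
      ∀ t ∈ Ω, ‖a' t.1‖ = ‖a t.1‖ ∧
        ‖b' t.2.1‖ = ‖b t.2.1‖ ∧
        ‖c' t.2.2‖ = ‖c t.2.2‖ := by
  intro a' b' c' hnz' ha0' hb0' hsol' t ht
  set x : Fin (n₁ + 1) → ℝ := fun i =>
    Real.log (‖a' i‖) - Real.log (‖a i‖) with hx
  set y : Fin (n₂ + 1) → ℝ := fun j =>
    Real.log (‖b' j‖) - Real.log (‖b j‖) with hy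
  set z : Fin (n₃ + 1) → ℝ := fun k =>
    Real.log (‖c' k‖) - Real.log (‖c k‖) with hz
  have hx0 : x 0 = 0 := by simp [hx, ha0, ha0']
  have hy0 : y 0 = 0 := by simp [hy, hb0, hb0']
  have hsum : ∀ s ∈ Ω, x s.1 + y s.2.1 + z s.2.2 = 0 := by
    intro s hs
    obtain ⟨ha1, hb1, hc1⟩ := hnz s hs
    obtain ⟨ha2, hb2, hc2⟩ := hnz' s hs
    have heq : ‖a' s.1‖ * ‖b' s.2.1‖ * ‖c' s.2.2‖
        = ‖a s.1‖ * ‖b s.2.1‖ * ‖c s.2.2‖ := by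
      rw [← norm_mul, ← norm_mul, ← norm_mul, ← norm_mul, ← hsol s hs, ← hsol' s hs]
    have hlog := congrArg Real.log heq
    rw [Real.log_mul (mul_ne_zero (by simpa using ha2) (by simpa using hb2)) (by simpa using hc2),
        Real.log_mul (by simpa using ha2) (by simpa using hb2),
        Real.log_mul (mul_ne_zero (by simpa using ha1) (by simpa using hb1)) (by simpa using hc1),
        Real.log_mul (by simpa using ha1) (by simpa using hb1)] at hlog
    simp only [hx, hy, hz]
    linarith
  obtain ⟨hxt, hyt, hzt⟩ := hA x y z hx0 hy0 hsum t ht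
  obtain ⟨ha1, hb1, hc1⟩ := hnz t ht
  obtain ⟨ha2, hb2, hc2⟩ := hnz' t ht
  have key : ∀ u v : ℂ, u ≠ 0 → v ≠ 0 →
      Real.log (‖u‖) - Real.log (‖v‖) = 0 →
      ‖u‖ = ‖v‖ := by
    intro u v hu hv h
    have hu' : 0 < ‖u‖ := by simpa using hu
    have hv' : 0 < ‖v‖ := by simpa using hv
    have := sub_eq_zero.mp h
    calc ‖u‖ = Real.exp (Real.log (‖u‖)) := (Real.exp_log hu').symm
      _ = Real.exp (Real.log (‖v‖)) := by rw [this]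
      _ = ‖v‖ := Real.exp_log hv'
  exact ⟨key _ _ ha2 ha1 hxt, key _ _ hb2 hb1 hyt, key _ _ hc2 hc1 hzt⟩
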